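/- Let [A] be an interval m×n matrix with rows [a_i] = [a̲_i, ā_i], let [b] = [b̲, b̄] be an interval vector in ℝ^m with midpoint b_c = (b̲+b̄)/2 and radius δ = (b̄−b̲)/2, let x_c ∈ ℝ^n and r ≥ 0. Then the cube {x ∈ ℝ^n : ‖x − x_c‖_∞ ≤ r} is contained in the tolerance solution set Σ_∀∃([A],[b]) if and only if for every i ∈ {1,…,m} and every row vector a with a̲_i ≤ a ≤ ā_i componentwise, |a·x_c − (b_c)_i| + r‖a‖₁ ≤ δ_i, where ‖a‖₁ is the 1-norm of a. -/
import Mathlib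


open Matrix Finset

/-- The sup-norm cube of radius `r` centered at `x_c` is contained in the
tolerance solution set `Σ_∀∃([A],[b])` iff for every row index `i` and every row
`a ∈ [a̲_i, ā_i]`, `|a·x_c − (b_c)_i| + r‖a‖₁ ≤ δ_i`. -/
theorem cube_subset_tolerance_iff
    {m n : ℕ} (Al Au : Matrix (Fin m) (Fin n) ℝ) (hA : ∀ i j, Al i j ≤ Au i j)
    (bl bu : Fin m → ℝ) (hb : ∀ i, bl i ≤ bu i)
    (bc δ : Fin m → ℝ)
    (hbc : ∀ i, bc i = (bl i + bu i) / 2)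
    (hδ : ∀ i, δ i = (bu i - bl i) / 2)
    (xc : Fin n → ℝ) (r : ℝ) (hr : 0 ≤ r) :
    {x : Fin n → ℝ | ∀ j, |x j - xc j| ≤ r} ⊆
      {x | ∀ A : Matrix (Fin m) (Fin n) ℝ,
        (∀ i j, Al i j ≤ A i j ∧ A i j ≤ Au i j) →
        ∀ i, bl i ≤ A.mulVec x i ∧ A.mulVec x i ≤ bu i} ↔
    (∀ i, ∀ a : Fin n → ℝ, (∀ j, Al i j ≤ a j ∧ a j ≤ Au i j) →
        |a ⬝ᵥ xc - bc i| + r * ∑ j, |a j| ≤ δ i) := by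
  have key : ∀ (a x : Fin n → ℝ), a ⬝ᵥ x - a ⬝ᵥ xc = ∑ j, a j * (x j - xc j) := by
    intro a x
    simp [dotProduct, mul_sub, Finset.sum_sub_distrib]
  constructor
  · intro h i a ha
    set t : ℝ := ∑ j, |a j| with ht
    have ht0 : 0 ≤ t := Finset.sum_nonneg fun j _ => abs_nonneg _
    set d : ℝ := a ⬝ᵥ xc - bc i with hd
    set ε : ℝ := if 0 ≤ d then (1:ℝ) else -1 with hε
    set x : Fin n → ℝ := fun j => xc j + ε * r * (if 0 ≤ a j then (1:ℝ) else -1) with hx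
    have hxmem : ∀ j, |x j - xc j| ≤ r := by
      intro j
      have e : x j - xc j = ε * r * (if 0 ≤ a j then (1:ℝ) else -1) := by simp [hx]
      rw [e, abs_mul, abs_mul]
      have h1 : |ε| = 1 := by rw [hε]; split_ifs <;> simp
      have h2 : |if 0 ≤ a j then (1:ℝ) else -1| = 1 := by split_ifs <;> simp
      rw [h1, h2, abs_of_nonneg hr, one_mul, mul_one]
    set A : Matrix (Fin m) (Fin n) ℝ :=
      Matrix.of (fun i' j => if i' = i then a j else Al i' j) with hA'
    have hAadm : ∀ i' j, Al i' j ≤ A i' j ∧ A i' j ≤ Au i' j := by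
      intro i' j
      by_cases hii : i' = i <;> simp [hA', hii, hA i' j, (ha j).1, (ha j).2]
    have hAi : A.mulVec x i = a ⬝ᵥ x := by
      simp [hA', Matrix.mulVec, dotProduct]
    have hbx := h hxmem A hAadm i
    rw [hAi] at hbx
    have hsum : ∑ j, a j * (x j - xc j) = ε * r * t := by
      rw [ht, Finset.mul_sum]
      apply Finset.sum_congr rfl
      intro j _
      have e : x j - xc j = ε * r * (if 0 ≤ a j then (1:ℝ) else -1) := by simp [hx]
      rw [e]
      split_ifs with hj
      · rw [abs_of_nonneg hj]; ring
      · rw [abs_of_neg (lt_of_not_ge hj)]; ring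
    have hax : a ⬝ᵥ x = a ⬝ᵥ xc + ε * r * t := by
      have hk := key a x
      linarith [hk, hsum]
    have hbci := hbc i
    have hδi := hδ i
    rcases le_or_gt 0 d with h0 | h0
    · have hε1 : ε = 1 := if_pos h0
      rw [abs_of_nonneg h0]
      have h2 := hbx.2
      rw [hax, hε1, one_mul] at h2
      have hd' : d = a ⬝ᵥ xc - bc i := hd
      linarith
    · have hε1 : ε = -1 := if_neg (not_le.mpr h0)
      rw [abs_of_neg h0]
      have h2 := hbx.1
      rw [hax, hε1] at h2
      have hd' : d = a ⬝ᵥ xc - bc i := hd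
      have : (-1 : ℝ) * r * t = -(r * t) := by ring
      rw [this] at h2
      linarith
  · intro h x hx A hAd i
    have haa : ∀ j, Al i j ≤ A i j ∧ A i j ≤ Au i j := fun j => hAd i j
    have h1 := h i (A i) haa
    have hAx : A.mulVec x i = A i ⬝ᵥ x := rfl
    have hsum : |∑ j, A i j * (x j - xc j)| ≤ r * ∑ j, |A i j| := by
      calc |∑ j, A i j * (x j - xc j)| ≤ ∑ j, |A i j * (x j - xc j)| :=
            Finset.abs_sum_le_sum_abs _ _
        _ ≤ ∑ j, |A i j| * r := by
            apply Finset.sum_le_sum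
            intro j _
            rw [abs_mul]
            exact mul_le_mul_of_nonneg_left (hx j) (abs_nonneg _)
        _ = r * ∑ j, |A i j| := by rw [← Finset.sum_mul]; ring
    have hkey := key (A i) x
    have h2 : |A i ⬝ᵥ x - bc i| ≤ δ i := by
      have e : A i ⬝ᵥ x - bc i = (A i ⬝ᵥ xc - bc i) + ∑ j, A i j * (x j - xc j) := by
        linarith [hkey]
      rw [e]
      calc |(A i ⬝ᵥ xc - bc i) + ∑ j, A i j * (x j - xc j)|
          ≤ |A i ⬝ᵥ xc - bc i| + |∑ j, A i j * (x j - xc j)| := abs_add_le _ _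
        _ ≤ |A i ⬝ᵥ xc - bc i| + r * ∑ j, |A i j| := by linarith
        _ ≤ δ i := h1
    rw [hAx]
    have h3 := abs_le.mp h2
    have hbci := hbc i
    have hδi := hδ i
    exact ⟨by linarith [h3.1], by linarith [h3.2]⟩
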